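/- Let (θ, Vy) be a Ritz pair of A with respect to V (V*V = I, ‖y‖ = 1, V*(A - θI)Vy = 0) that is not an exact eigenpair, and let x satisfy V*(A - θI)*(A - θI)Vx = y. If K is a scalar satisfying K = ‖(A - θI)Vy‖² + K·⟨(A - θI)V(I - yy*)x, (A - θI)Vy⟩, then the vector m := y + K(I - yy*)x satisfies the least-squares normal equations (I - yy*)V*(A - θI)*(A - θI)V(m - y) = -(I - yy*)V*(A - θI)*(A - θI)Vy; equivalently V*(A - θI)*(A - θI)Vm = Ky. -/
import Mathlib


open Matrix
open scoped ComplexConjugate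

/-- Squared Euclidean norm of a complex vector. -/
noncomputable def nsq {k : ℕ} (x : Fin k → ℂ) : ℝ := ∑ i, ‖x i‖ ^ 2

/-- Standard Hermitian inner product (conjugate-linear in the first argument). -/
noncomputable def cip {k : ℕ} (x y : Fin k → ℂ) : ℂ := ∑ i, conj (x i) * y i

/-- Orthogonal projection `(I - yy*) v`. -/
noncomputable def proj {k : ℕ} (y v : Fin k → ℂ) : Fin k → ℂ := v - cip y v • y

lemma cip_eq_dot {k : ℕ} (a b : Fin k → ℂ) : cip a b = star a ⬝ᵥ b := by
  simp [cip, dotProduct, RCLike.star_def]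

lemma cip_adj {p q : ℕ} (N : Matrix (Fin p) (Fin q) ℂ) (u : Fin p → ℂ) (v : Fin q → ℂ) :
    cip u (N.mulVec v) = cip (Nᴴ.mulVec u) v := by
  rw [cip_eq_dot, cip_eq_dot, Matrix.star_mulVec, conjTranspose_conjTranspose,
    Matrix.dotProduct_mulVec]

lemma cip_self {k : ℕ} (a : Fin k → ℂ) : cip a a = (nsq a : ℝ) := by
  simp only [cip, nsq]
  push_cast
  congr 1; funext i
  rw [mul_comm, Complex.mul_conj']

lemma cip_conj {k : ℕ} (a b : Fin k → ℂ) : conj (cip a b) = cip b a := by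
  simp [cip, map_sum, mul_comm]

lemma cip_sub_right {k : ℕ} (a b c : Fin k → ℂ) : cip a (b - c) = cip a b - cip a c := by
  simp [cip, mul_sub, Finset.sum_sub_distrib]

lemma cip_smul_right {k : ℕ} (s : ℂ) (a b : Fin k → ℂ) : cip a (s • b) = s * cip a b := by
  simp only [cip, Pi.smul_apply, smul_eq_mul, Finset.mul_sum]
  exact Finset.sum_congr rfl fun i _ => by ring

lemma cip_sub_left {k : ℕ} (a b c : Fin k → ℂ) : cip (a - b) c = cip a c - cip b c := by
  simp [cip, sub_mul, Finset.sum_sub_distrib]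

lemma cip_smul_left {k : ℕ} (s : ℂ) (a b : Fin k → ℂ) : cip (s • a) b = conj s * cip a b := by
  simp only [cip, Pi.smul_apply, smul_eq_mul, Finset.mul_sum]
  exact Finset.sum_congr rfl fun i _ => by rw [RingHom.map_mul]; ring

lemma nsq_ne_zero {k : ℕ} {v : Fin k → ℂ} (hv : v ≠ 0) : ((nsq v : ℝ) : ℂ) ≠ 0 := by
  have : nsq v ≠ 0 := by
    intro h
    apply hv
    funext i
    have hnn : ∀ j ∈ Finset.univ, (0:ℝ) ≤ ‖v j‖^2 := fun j _ => sq_nonneg _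
    have := (Finset.sum_eq_zero_iff_of_nonneg hnn).mp h i (Finset.mem_univ i)
    simpa using this
  exact_mod_cast this

theorem stmt19 {n k : ℕ} (A : Matrix (Fin n) (Fin n) ℂ) (V : Matrix (Fin n) (Fin k) ℂ)
    (θ : ℂ) (y x : Fin k → ℂ)
    (hV : Vᴴ * V = 1) (hy : nsq y = 1)
    (hRitz : (Vᴴ * ((A - θ • 1) * V)).mulVec y = 0)
    (hnotexact : (A - θ • 1).mulVec (V.mulVec y) ≠ 0)
    (M : Matrix (Fin k) (Fin k) ℂ)
    (hM : M = Vᴴ * (A - θ • 1)ᴴ * ((A - θ • 1) * V))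
    (hx : M.mulVec x = y)
    (K : ℂ)
    (hK : K = ((nsq ((A - θ • 1).mulVec (V.mulVec y)) : ℝ) : ℂ)
        + K * cip ((A - θ • 1).mulVec (V.mulVec (proj y x)))
            ((A - θ • 1).mulVec (V.mulVec y)))
    (m : Fin k → ℂ) (hm : m = y + K • proj y x) :
    proj y (M.mulVec (m - y)) = -(proj y (M.mulVec y)) ∧ M.mulVec m = K • y := by
  set B : Matrix (Fin n) (Fin k) ℂ := (A - θ • 1) * V with hB
  have hM' : M = Bᴴ * B := by rw [hM, hB, conjTranspose_mul]
  have hBmul : ∀ v : Fin k → ℂ, B.mulVec v = (A - θ • 1).mulVec (V.mulVec v) := by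
    intro v; rw [hB, ← Matrix.mulVec_mulVec]
  have hadj : ∀ u v : Fin k → ℂ, cip u (M.mulVec v) = cip (B.mulVec u) (B.mulVec v) := by
    intro u v
    rw [hM', ← Matrix.mulVec_mulVec, cip_adj, conjTranspose_conjTranspose]
  have hyy : cip y y = 1 := by rw [cip_self, hy]; norm_num
  set s : ℂ := cip y (M.mulVec y) with hs
  have hsval : s = ((nsq (B.mulVec y) : ℝ) : ℂ) := by
    rw [hs, hadj, cip_self]
  have hBy0 : B.mulVec y ≠ 0 := by rw [hBmul]; exact hnotexact
  have hsne : s ≠ 0 := by rw [hsval]; exact nsq_ne_zero hBy0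
  have hxMy : cip x (M.mulVec y) = 1 := by
    rw [hadj, cip_adj, Matrix.mulVec_mulVec, ← hM', hx, hyy]
  set r : ℂ := cip y x with hr
  have hrval : r = ((nsq (B.mulVec x) : ℝ) : ℂ) := by
    have h1 : cip x (M.mulVec x) = ((nsq (B.mulVec x) : ℝ) : ℂ) := by
      rw [hadj, cip_self]
    have h2 : r = conj (cip x (M.mulVec x)) := by
      rw [cip_conj, hx]
    rw [h2, h1, Complex.conj_ofReal]
  have hrconj : conj r = r := by rw [hrval, Complex.conj_ofReal]
  have hproj : proj y x = x - r • y := by rw [proj, ← hr]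
  have hp : cip (B.mulVec (proj y x)) (B.mulVec y) = 1 - r * s := by
    rw [← hadj, hproj, cip_sub_left, cip_smul_left, hrconj, hxMy, ← hs]
  rw [← hBmul, ← hBmul, ← hsval, hp] at hK
  have h0 : s * (1 - K * r) = 0 := by linear_combination -hK
  have hKr : K * r = 1 := by
    have := (mul_eq_zero.mp h0).resolve_left hsne
    linear_combination -this
  have h2 : M.mulVec m = K • y := by
    rw [hm, hproj, Matrix.mulVec_add, Matrix.mulVec_smul, Matrix.mulVec_sub,
      Matrix.mulVec_smul, hx]
    funext i
    simp only [Pi.add_apply, Pi.smul_apply, Pi.sub_apply, smul_eq_mul]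
    have : K * (r * M.mulVec y i) = M.mulVec y i := by
      rw [← mul_assoc, hKr, one_mul]
    linear_combination -this
  refine ⟨?_, h2⟩
  rw [Matrix.mulVec_sub, h2]
  show (K • y - M.mulVec y) - cip y (K • y - M.mulVec y) • y
      = -((M.mulVec y) - cip y (M.mulVec y) • y)
  rw [cip_sub_right, cip_smul_right, hyy, ← hs]
  funext i
  simp only [Pi.sub_apply, Pi.smul_apply, Pi.neg_apply, smul_eq_mul]
  ring
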